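/- Consider the c-complete bipartite hitting game: a referee privately selects a perfect matching M in the complete bipartite graph K_{c,c}; in each round the player proposes one edge and wins upon proposing an edge of M. Any player that wins within f(c) rounds with probability at least 1/2 must satisfy f(c) ≥ c/3. -/

import Mathlib

/-- A set of edges of the complete bipartite graph `K_{c,c}` (edges are pairs in
`Fin c × Fin c`) is a matching if no two distinct edges share an endpoint. -/
def IsBipartiteMatching (c : ℕ) (s : Finset (Fin c × Fin c)) : Prop :=
  ∀ e ∈ s, ∀ e' ∈ s, e ≠ e' → e.1 ≠ e'.1 ∧ e.2 ≠ e'.2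

open MeasureTheory Equiv Finset ENNReal

lemma fiber_card (c : ℕ) (a b : Fin c) :
    (Finset.univ.filter fun π : Equiv.Perm (Fin c) => π a = b).card = (c - 1).factorial := by
  have key : ∀ b' : Fin c,
      (Finset.univ.filter fun π : Equiv.Perm (Fin c) => π a = b').card
        = (Finset.univ.filter fun π : Equiv.Perm (Fin c) => π a = b).card := by
    intro b'
    apply Finset.card_bij' (fun π _ => Equiv.swap b' b * π) (fun π _ => Equiv.swap b' b * π)
    · intro π hπ
      simp only [Finset.mem_filter, Finset.mem_univ, true_and] at hπ ⊢
      simp [Equiv.Perm.mul_apply, hπ]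
    · intro π hπ
      simp only [Finset.mem_filter, Finset.mem_univ, true_and] at hπ ⊢
      simp [Equiv.Perm.mul_apply, hπ]
    · intro π _; simp [← mul_assoc]
    · intro π _; simp [← mul_assoc]
  have hsum : ∑ b' : Fin c,
      (Finset.univ.filter fun π : Equiv.Perm (Fin c) => π a = b').card
        = (Finset.univ : Finset (Equiv.Perm (Fin c))).card :=
    (Finset.card_eq_sum_card_fiberwise (fun π _ => Finset.mem_univ (π a))).symm
  simp only [key, Finset.sum_const, Finset.card_univ, Fintype.card_perm, smul_eq_mul,
    Fintype.card_fin] at hsum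
  have hc : 0 < c := b.pos
  rw [← Nat.mul_factorial_pred hc.ne'] at hsum
  exact Nat.eq_of_mul_eq_mul_left hc hsum

/-- Lower bound for the `c`-complete bipartite hitting game: a (possibly randomized) player,
modeled as a probability distribution over infinite sequences of proposed edges, that for
every perfect matching `M` of `K_{c,c}` wins within `f` rounds (proposes an edge of `M` in
some round `r < f`) with probability at least `1/2`, must satisfy `f ≥ c/3`. -/
theorem stmt_8 (c : ℕ) (hc : 1 ≤ c) (f : ℕ) (strategy : PMF (ℕ → Fin c × Fin c))
    (hwin : ∀ s : Finset (Fin c × Fin c), s.card = c → IsBipartiteMatching c s →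
      1 / 2 ≤ strategy.toMeasure {σ | ∃ r < f, σ r ∈ s}) :
    (c : ℝ) / 3 ≤ f := by
  classical
  set μ := strategy.toMeasure with hμ
  haveI : IsProbabilityMeasure μ := PMF.toMeasure.isProbabilityMeasure strategy
  -- matching associated to a permutation
  set S : Equiv.Perm (Fin c) → Finset (Fin c × Fin c) :=
    fun π => Finset.univ.image fun i => (i, π i) with hS
  have hmemS : ∀ π e, e ∈ S π ↔ π e.1 = e.2 := by
    intro π e
    simp only [hS, Finset.mem_image, Finset.mem_univ, true_and]
    constructor
    · rintro ⟨i, rfl⟩; rfl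
    · intro h; exact ⟨e.1, by rw [h]⟩
  have hcard : ∀ π, (S π).card = c := by
    intro π
    rw [hS, Finset.card_image_of_injective _ (fun i j h => (Prod.mk.injEq _ _ _ _).mp h |>.1),
      Finset.card_univ, Fintype.card_fin]
  have hmatch : ∀ π, IsBipartiteMatching c (S π) := by
    intro π e he e' he' hne
    rw [hmemS] at he he'
    constructor
    · intro h1
      exact hne (Prod.ext h1 (by rw [← he, ← he', h1]))
    · intro h2
      exact hne (Prod.ext (π.injective (he.trans (h2.trans he'.symm))) h2)
  -- events
  set E : Equiv.Perm (Fin c) → ℕ → Set (ℕ → Fin c × Fin c) :=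
    fun π r => (fun σ => σ r) ⁻¹' {e | e ∈ S π} with hE
  have hEmeas : ∀ π r, MeasurableSet (E π r) :=
    fun π r => (measurable_pi_apply r) (Set.toFinite _).measurableSet
  -- lower bound on the sum of measures
  have h1 : (c.factorial : ℝ≥0∞) * (1 / 2)
      ≤ ∑ π : Equiv.Perm (Fin c), μ {σ | ∃ r < f, σ r ∈ S π} := by
    calc (c.factorial : ℝ≥0∞) * (1 / 2)
        = (Finset.univ : Finset (Equiv.Perm (Fin c))).card • ((1 : ℝ≥0∞) / 2) := by
          rw [Finset.card_univ, Fintype.card_perm, Fintype.card_fin, nsmul_eq_mul]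
      _ ≤ ∑ π : Equiv.Perm (Fin c), μ {σ | ∃ r < f, σ r ∈ S π} :=
          Finset.card_nsmul_le_sum _ _ _ (fun π _ => hwin (S π) (hcard π) (hmatch π))
  -- union bound
  have h2 : ∀ π : Equiv.Perm (Fin c),
      μ {σ | ∃ r < f, σ r ∈ S π} ≤ ∑ r ∈ Finset.range f, μ (E π r) := by
    intro π
    have : {σ : ℕ → Fin c × Fin c | ∃ r < f, σ r ∈ S π} = ⋃ r ∈ Finset.range f, E π r := by
      ext σ; simp [hE, Finset.mem_range]
    rw [this]
    exact measure_biUnion_finset_le _ _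
  -- fixed round: sum over permutations
  have h3 : ∀ r, ∑ π : Equiv.Perm (Fin c), μ (E π r) = ((c - 1).factorial : ℝ≥0∞) := by
    intro r
    have : ∀ π : Equiv.Perm (Fin c), μ (E π r) = ∫⁻ σ, (E π r).indicator 1 σ ∂μ :=
      fun π => (lintegral_indicator_one (hEmeas π r)).symm
    simp_rw [this]
    rw [← lintegral_finset_sum _ (fun π _ => (measurable_one.indicator (hEmeas π r)))]
    have hpt : ∀ σ : ℕ → Fin c × Fin c,
        ∑ π : Equiv.Perm (Fin c), (E π r).indicator (1 : (ℕ → Fin c × Fin c) → ℝ≥0∞) σ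
          = ((c - 1).factorial : ℝ≥0∞) := by
      intro σ
      have : ∀ π : Equiv.Perm (Fin c), (E π r).indicator (1 : (ℕ → Fin c × Fin c) → ℝ≥0∞) σ
          = if π (σ r).1 = (σ r).2 then 1 else 0 := by
        intro π
        rw [Set.indicator_apply]
        simp [hE, hmemS]
      simp_rw [this]
      rw [Finset.sum_boole]
      rw [fiber_card c (σ r).1 (σ r).2]
    simp_rw [hpt]
    simp [lintegral_const]
  -- combine
  have h4 : (c.factorial : ℝ≥0∞) * (1 / 2) ≤ (f : ℝ≥0∞) * ((c - 1).factorial : ℝ≥0∞) := by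
    calc (c.factorial : ℝ≥0∞) * (1 / 2)
        ≤ ∑ π : Equiv.Perm (Fin c), μ {σ | ∃ r < f, σ r ∈ S π} := h1
      _ ≤ ∑ π : Equiv.Perm (Fin c), ∑ r ∈ Finset.range f, μ (E π r) :=
          Finset.sum_le_sum fun π _ => h2 π
      _ = ∑ r ∈ Finset.range f, ∑ π : Equiv.Perm (Fin c), μ (E π r) := Finset.sum_comm
      _ = ∑ r ∈ Finset.range f, ((c - 1).factorial : ℝ≥0∞) := by simp_rw [h3]
      _ = (f : ℝ≥0∞) * ((c - 1).factorial : ℝ≥0∞) := by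
          rw [Finset.sum_const, Finset.card_range, nsmul_eq_mul]
  -- get natural-number inequality
  have h5 : c.factorial ≤ 2 * (f * (c - 1).factorial) := by
    have := h4
    rw [mul_one_div, ENNReal.div_le_iff_le_mul (by norm_num) (by norm_num)] at this
    have h6 : (c.factorial : ℝ≥0∞) ≤ ((2 * (f * (c - 1).factorial) : ℕ) : ℝ≥0∞) := by
      push_cast
      calc (c.factorial : ℝ≥0∞) ≤ (f : ℝ≥0∞) * ((c - 1).factorial : ℝ≥0∞) * 2 := this
        _ = 2 * ((f : ℝ≥0∞) * ((c - 1).factorial : ℝ≥0∞)) := by ring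
    exact_mod_cast h6
  obtain ⟨n, rfl⟩ := Nat.exists_eq_add_of_le hc
  have hc' : 1 + n = n + 1 := by omega
  rw [hc'] at h5 ⊢
  rw [Nat.factorial_succ] at h5
  simp only [Nat.add_sub_cancel] at h5
  have h7 : n + 1 ≤ 2 * f := by
    have hmul : (n + 1) * n.factorial ≤ 2 * f * n.factorial := by
      calc (n + 1) * n.factorial ≤ 2 * (f * n.factorial) := h5
        _ = 2 * f * n.factorial := by ring
    exact Nat.le_of_mul_le_mul_right hmul (Nat.factorial_pos n)
  have : ((n : ℝ) + 1) ≤ 2 * f := by exact_mod_cast h7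
  push_cast
  linarith
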